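/- Fix m ∈ ℕ and let S be an m × m matrix with entries in ℕ such that S_{ii} = 0 for all i and for every μ the μ-th row sum equals the μ-th column sum (Σ_ν S_{μν} = Σ_ν S_{νμ}). Then S is a finite sum of cycle matrices; equivalently, S belongs to the additive submonoid of m × m matrices over ℕ generated by the cycle matrices. -/

import Mathlib

set_option maxHeartbeats 1000000 in
/-- A cycle matrix: `E_{l(0) l(1)} + E_{l(1) l(2)} + … + E_{l(p−1) l(0)}` for some
`p ≥ 2` and injective `l : Fin p → Fin m`. -/
def IsCycleMatrix {m : ℕ} (C : Matrix (Fin m) (Fin m) ℕ) : Prop :=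
  ∃ (p : ℕ) (hp : 2 ≤ p) (l : Fin p → Fin m), Function.Injective l ∧
    C = ∑ i : Fin p, Matrix.single (l i) (l (i + ⟨1, by omega⟩)) 1

lemma cycle_diag' {m : ℕ} (p : ℕ) (hp : 2 ≤ p) (l : Fin p → Fin m) (hl : Function.Injective l) (i : Fin m) :
    (∑ k : Fin p, Matrix.single (l k) (l (k + ⟨1, by omega⟩)) 1) i i = 0 := by
  rw [Matrix.sum_apply]
  apply Finset.sum_eq_zero
  intro k _
  have hne : k ≠ k + ⟨1, by omega⟩ := by
    intro h
    have hv := congrArg Fin.val h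
    rw [Fin.add_def] at hv
    simp only at hv
    rcases Nat.lt_or_ge (k.1 + 1) p with h1 | h1
    · rw [Nat.mod_eq_of_lt h1] at hv; omega
    · have : k.1 + 1 = p := by omega
      rw [this, Nat.mod_self] at hv
      omega
  have hne' : l k ≠ l (k + ⟨1, by omega⟩) := fun h => hne (hl h)
  simp only [Matrix.single, Matrix.of_apply, ite_eq_right_iff, and_imp]
  intro h1 h2
  exact absurd (h1.trans h2.symm) hne'

lemma cycle_sums' {m : ℕ} (p : ℕ) (hp : 2 ≤ p) (l : Fin p → Fin m) (μ : Fin m) :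
    ∑ ν, (∑ k : Fin p, Matrix.single (l k) (l (k + ⟨1, by omega⟩)) 1) μ ν
    = ∑ ν, (∑ k : Fin p, Matrix.single (l k) (l (k + ⟨1, by omega⟩)) 1) ν μ := by
  haveI : NeZero p := ⟨by omega⟩
  simp only [Matrix.sum_apply]
  rw [Finset.sum_comm, Finset.sum_comm (γ := Fin m)]
  have hrow : ∀ k : Fin p, ∑ ν, Matrix.single (l k) (l (k + ⟨1, by omega⟩)) 1 μ ν
      = if l k = μ then 1 else 0 := by
    intro k
    simp [Matrix.single, ite_and]
  have hcol : ∀ k : Fin p, ∑ ν, Matrix.single (l k) (l (k + ⟨1, by omega⟩)) 1 ν μ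
      = if l (k + ⟨1, by omega⟩) = μ then 1 else 0 := by
    intro k
    simp [Matrix.single, ite_and]
  rw [Finset.sum_congr rfl (fun k _ => hrow k), Finset.sum_congr rfl (fun k _ => hcol k)]
  exact (Fintype.sum_equiv (Equiv.addRight (⟨1, by omega⟩ : Fin p)) _ _ (fun k => rfl)).symm

lemma cycle_diag {m : ℕ} {C : Matrix (Fin m) (Fin m) ℕ} (hC : IsCycleMatrix C) (i : Fin m) :
    C i i = 0 := by
  obtain ⟨p, hp, l, hl, rfl⟩ := hC
  exact cycle_diag' p hp l hl i

lemma cycle_sums {m : ℕ} {C : Matrix (Fin m) (Fin m) ℕ} (hC : IsCycleMatrix C) (μ : Fin m) :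
    ∑ ν, C μ ν = ∑ ν, C ν μ := by
  obtain ⟨p, hp, l, hl, rfl⟩ := hC
  exact cycle_sums' p hp l μ

set_option maxHeartbeats 1000000 in
lemma exists_cycle_le {m : ℕ} (S : Matrix (Fin m) (Fin m) ℕ)
    (hdiag : ∀ i, S i i = 0)
    (hsums : ∀ μ, ∑ ν, S μ ν = ∑ ν, S ν μ)
    (hS : S ≠ 0) :
    ∃ C, IsCycleMatrix C ∧ (∀ x y, C x y ≤ S x y) ∧ ∃ x y, 0 < C x y := by
  classical
  have hab' : ∃ a b, 0 < S a b := by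
    by_contra h
    push_neg at h
    exact hS (by ext x y; simpa using h x y)
  obtain ⟨a, b, hab⟩ := hab'
  have hcolpos : ∀ v w : Fin m, 0 < S v w → 0 < ∑ ν, S w ν := by
    intro v w hw
    rw [hsums w]
    calc 0 < S v w := hw
      _ ≤ ∑ ν, S ν w := Finset.single_le_sum (f := fun ν => S ν w)
          (fun _ _ => Nat.zero_le _) (Finset.mem_univ v)
  have hstep0 : ∀ v : {v : Fin m // 0 < ∑ ν, S v ν}, ∃ w : {v : Fin m // 0 < ∑ ν, S v ν}, 0 < S v.1 w.1 := by
    rintro ⟨v, hv⟩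
    have hex : ∃ w, 0 < S v w := by
      by_contra h
      push_neg at h
      simp only [Nat.le_zero] at h
      rw [Finset.sum_eq_zero (fun w _ => h w)] at hv
      exact absurd hv (lt_irrefl 0)
    obtain ⟨w, hw⟩ := hex
    exact ⟨⟨w, hcolpos v w hw⟩, hw⟩
  choose nxt hnxt using hstep0
  have hPb : 0 < ∑ ν, S b ν := hcolpos a b hab
  set f : ℕ → {v : Fin m // 0 < ∑ ν, S v ν} := fun n => nxt^[n] ⟨b, hPb⟩ with hfdef
  have hstep : ∀ n, 0 < S (f n).1 (f (n+1)).1 := by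
    intro n
    have h1 : f (n+1) = nxt (f n) := Function.iterate_succ_apply' nxt n _
    rw [h1]
    exact hnxt (f n)
  have hginj : ∃ x y : Fin (m+1), x ≠ y ∧ (f x.1).1 = (f y.1).1 := by
    apply Fintype.exists_ne_map_eq_of_card_lt (fun k : Fin (m+1) => (f k.1).1)
    simp
  obtain ⟨x, y, hxy, hfxy⟩ := hginj
  have hQex : ∃ j, ∃ i, i < j ∧ (f i).1 = (f j).1 := by
    rcases Nat.lt_trichotomy x.1 y.1 with h | h | h
    · exact ⟨y.1, x.1, h, hfxy⟩
    · exact absurd (Fin.ext h) hxy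
    · exact ⟨x.1, y.1, h, hfxy.symm⟩
  haveI : DecidablePred (fun j => ∃ i, i < j ∧ (f i).1 = (f j).1) := fun _ => Classical.dec _
  set j0 := Nat.find hQex with hj0
  obtain ⟨i, hij, hfij⟩ := Nat.find_spec hQex
  set p := j0 - i with hpdef
  have hp : 2 ≤ p := by
    by_contra h
    have hj : j0 = i + 1 := by omega
    have h2 := hstep i
    rw [← hj] at h2
    rw [← hfij] at h2
    rw [hdiag (f i).1] at h2
    exact absurd h2 (lt_irrefl 0)
  set l : Fin p → Fin m := fun k => (f (i + k.1)).1 with hldef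
  have hlt_mono : ∀ k k' : Fin p, k.1 < k'.1 → l k ≠ l k' := by
    intro k k' hkk' h
    have hk'p : k'.1 < p := k'.2
    have hlt : i + k'.1 < j0 := by omega
    exact Nat.find_min hQex hlt ⟨i + k.1, by omega, h⟩
  have hlinj : Function.Injective l := by
    intro k k' h
    rcases Nat.lt_trichotomy k.1 k'.1 with h1 | h1 | h1
    · exact absurd h (hlt_mono k k' h1)
    · exact Fin.ext h1
    · exact absurd h.symm (hlt_mono k' k h1)
  have hl1 : ∀ k : Fin p, l (k + ⟨1, by omega⟩) = (f (i + k.1 + 1)).1 := by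
    intro k
    have hval : ((k + ⟨1, by omega⟩ : Fin p)).1 = (k.1 + 1) % p := by
      rw [Fin.add_def]
    rcases Nat.lt_or_ge (k.1 + 1) p with h | h
    · show (f (i + ((k + ⟨1, by omega⟩ : Fin p)).1)).1 = _
      rw [hval, Nat.mod_eq_of_lt h, ← Nat.add_assoc]
    · have hk1 : k.1 + 1 = p := by omega
      show (f (i + ((k + ⟨1, by omega⟩ : Fin p)).1)).1 = _
      rw [hval, hk1, Nat.mod_self]
      have hjj : i + k.1 + 1 = j0 := by omega
      rw [hjj]
      simpa using hfij
  have hedges : ∀ k : Fin p, 0 < S (l k) (l (k + ⟨1, by omega⟩)) := by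
    intro k
    rw [hl1 k]
    exact hstep (i + k.1)
  have key : ∃ (p : ℕ) (hp : 2 ≤ p) (l : Fin p → Fin m), Function.Injective l ∧
      ∀ k : Fin p, 0 < S (l k) (l (k + ⟨1, by omega⟩)) := ⟨p, hp, l, hlinj, hedges⟩
  clear hedges hlinj hlt_mono hl1 hldef hpdef hp
  obtain ⟨p, hp, l, hlinj, hedges⟩ := key
  refine ⟨∑ k : Fin p, Matrix.single (l k) (l (k + ⟨1, by omega⟩)) 1,
    ⟨p, hp, l, hlinj, rfl⟩, ?_, ?_⟩
  · intro x y
    rw [Matrix.sum_apply]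
    by_cases hx : ∃ k : Fin p, l k = x ∧ l (k + ⟨1, by omega⟩) = y
    · obtain ⟨k, hk1, hk2⟩ := hx
      have hsum : ∑ k' : Fin p, Matrix.single (l k') (l (k' + ⟨1, by omega⟩)) 1 x y = 1 := by
        rw [Finset.sum_eq_single_of_mem k (Finset.mem_univ k)]
        · simp [Matrix.single, hk1, hk2]
        · intro k' _ hk'
          simp only [Matrix.single, Matrix.of_apply, ite_eq_right_iff, and_imp]
          intro h1 _
          exact absurd (hlinj (h1.trans hk1.symm)) hk'
      rw [hsum]
      have h3 := hedges k
      rw [hk1, hk2] at h3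
      omega
    · push_neg at hx
      have hsum : ∑ k' : Fin p, Matrix.single (l k') (l (k' + ⟨1, by omega⟩)) 1 x y = 0 := by
        apply Finset.sum_eq_zero
        intro k' _
        simp only [Matrix.single, Matrix.of_apply, ite_eq_right_iff, and_imp]
        intro h1 h2
        exact absurd h2 (hx k' h1)
      rw [hsum]
      exact Nat.zero_le _
  · refine ⟨l ⟨0, by omega⟩, l (⟨0, by omega⟩ + ⟨1, by omega⟩), ?_⟩
    have h1 : (1:ℕ) ≤ ∑ k : Fin p, Matrix.single (l k) (l (k + ⟨1, by omega⟩)) 1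
        (l ⟨0, by omega⟩) (l (⟨0, by omega⟩ + ⟨1, by omega⟩)) := by
      have h2 := Finset.single_le_sum (f := fun k : Fin p => Matrix.single (l k)
          (l (k + ⟨1, by omega⟩)) 1 (l ⟨0, by omega⟩) (l (⟨0, by omega⟩ + ⟨1, by omega⟩)))
        (fun k _ => Nat.zero_le _) (Finset.mem_univ (⟨0, by omega⟩ : Fin p))
      simpa [Matrix.single] using h2
    rw [Matrix.sum_apply]
    omega

/-- **The semigroup `Γ` is generated by cycles (Lemma 8.3)**: every `m × m` matrix over
`ℕ` with zero diagonal whose row sums equal the corresponding column sums is a finite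
sum of cycle matrices. -/
theorem gamma_generated_by_cycles {m : ℕ} (S : Matrix (Fin m) (Fin m) ℕ)
    (hdiag : ∀ i, S i i = 0)
    (hsums : ∀ μ, ∑ ν, S μ ν = ∑ ν, S ν μ) :
    S ∈ AddSubmonoid.closure {C : Matrix (Fin m) (Fin m) ℕ | IsCycleMatrix C} := by
  classical
  suffices h : ∀ (n : ℕ) (S : Matrix (Fin m) (Fin m) ℕ), (∀ i, S i i = 0) →
      (∀ μ, ∑ ν, S μ ν = ∑ ν, S ν μ) → (∑ x, ∑ y, S x y = n) →
      S ∈ AddSubmonoid.closure {C : Matrix (Fin m) (Fin m) ℕ | IsCycleMatrix C} by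
    exact h _ S hdiag hsums rfl
  intro n
  induction n using Nat.strong_induction_on with
  | _ n ih =>
    intro S hd hs htot
    by_cases h0 : S = 0
    · rw [h0]; exact zero_mem _
    obtain ⟨C, hC, hle, x0, y0, hpos⟩ := exists_cycle_le S hd hs h0
    have hST : S = C + (S - C) := by
      ext x y
      simp only [Matrix.add_apply, Matrix.sub_apply]
      have := hle x y
      omega
    rw [hST]
    refine add_mem (AddSubmonoid.subset_closure hC) ?_
    have hCd := cycle_diag hC
    have hCs := cycle_sums hC
    have hTsum_row : ∀ μ, ∑ ν, (S - C) μ ν = ∑ ν, S μ ν - ∑ ν, C μ ν := by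
      intro μ
      simp only [Matrix.sub_apply]
      exact Finset.sum_tsub_distrib _ (fun ν _ => hle μ ν)
    have hTsum_col : ∀ μ, ∑ ν, (S - C) ν μ = ∑ ν, S ν μ - ∑ ν, C ν μ := by
      intro μ
      simp only [Matrix.sub_apply]
      exact Finset.sum_tsub_distrib _ (fun ν _ => hle ν μ)
    have hCtot : 0 < ∑ x, ∑ y, C x y := by
      calc 0 < C x0 y0 := hpos
        _ ≤ ∑ y, C x0 y := Finset.single_le_sum (f := fun y => C x0 y)
            (fun _ _ => Nat.zero_le _) (Finset.mem_univ _)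
        _ ≤ ∑ x, ∑ y, C x y := Finset.single_le_sum (f := fun x => ∑ y, C x y)
            (fun _ _ => Nat.zero_le _) (Finset.mem_univ _)
    have hTtot : ∑ x, ∑ y, (S - C) x y = ∑ x, ∑ y, S x y - ∑ x, ∑ y, C x y := by
      rw [Finset.sum_congr rfl (fun x _ => hTsum_row x)]
      apply Finset.sum_tsub_distrib _
      intro x _
      exact Finset.sum_le_sum (fun y _ => hle x y)
    have hCle : ∑ x, ∑ y, C x y ≤ ∑ x, ∑ y, S x y :=
      Finset.sum_le_sum (fun x _ => Finset.sum_le_sum (fun y _ => hle x y))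
    refine ih (∑ x, ∑ y, (S - C) x y) (by omega) (S - C) ?_ ?_ rfl
    · intro i
      simp only [Matrix.sub_apply, hd i, hCd i]
    · intro μ
      rw [hTsum_row μ, hTsum_col μ, hs μ, hCs μ]
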